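/- Fix n ≥ 2 finite. Let B₀ be the directed 4-cycle viewed as a 2-partite tournament (parts being the two diagonal pairs), and let B be the n-partite tournament obtained by adding n−2 singleton parts with all edges oriented from B₀ to the new vertices (and arbitrary orientations among the new vertices). Let f be the automorphism of B fixing the new vertices and rotating the 4-cycle by one step. Then the 1-systems (B, id) and (B, f) have no joint embedding into any 1-system over finite n-partite tournaments: there is no n-partite tournament C with a partial automorphism g and embeddings of both systems. -/
import Mathlib


/-- An ω-partite tournament on vertex set `V`: non-adjacency is an equivalence relation
whose classes are the parts. -/
structure PartiteTournament (V : Type*) where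
  E : V → V → Prop
  asymm : ∀ u v, E u v → ¬ E v u
  nonadj_equiv : Equivalence (fun u v => ¬ E u v ∧ ¬ E v u)

/-- The edge relation of the `n`-partite tournament `B`: the directed 4-cycle `B₀`
(a 2-partite tournament, parts `{0,2}` and `{1,3}`) together with `n - 2` singleton
parts, all edges oriented from `B₀` to the new vertices, and an arbitrary tournament `t`
among the new vertices. -/
def EB14 (m : ℕ) (t : Fin m → Fin m → Prop) :
    Fin 4 ⊕ Fin m → Fin 4 ⊕ Fin m → Prop
  | Sum.inl a, Sum.inl b => b = a + 1
  | Sum.inl _, Sum.inr _ => True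
  | Sum.inr _, Sum.inl _ => False
  | Sum.inr a, Sum.inr b => t a b

/-- The automorphism `f` of `B`: rotate the 4-cycle by one step, fix the new vertices. -/
def f14 (m : ℕ) : Fin 4 ⊕ Fin m → Fin 4 ⊕ Fin m := Sum.map (· + 1) id

/-- The 1-systems `(B, id)` and `(B, f)` have no joint embedding into any 1-system over
finite `n`-partite tournaments. -/
theorem stmt14 (n : ℕ) (hn : 2 ≤ n) (t : Fin (n - 2) → Fin (n - 2) → Prop)
    (ht_total : ∀ a b, a ≠ b → t a b ∨ t b a)
    (ht_asymm : ∀ a b, t a b → ¬ t b a) (ht_irr : ∀ a, ¬ t a a) :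
    ¬ ∃ (W : Type) (_ : Finite W) (C : PartiteTournament W) (parts : W → Fin n),
        (∀ u v, parts u = parts v ↔ (¬ C.E u v ∧ ¬ C.E v u)) ∧
        ∃ (D : Set W) (g : W → W),
          Set.InjOn g D ∧
          (∀ u ∈ D, ∀ v ∈ D, C.E (g u) (g v) ↔ C.E u v) ∧
          ∃ e₁ e₂ : Fin 4 ⊕ Fin (n - 2) → W,
            Function.Injective e₁ ∧ Function.Injective e₂ ∧
            (∀ x y, C.E (e₁ x) (e₁ y) ↔ EB14 (n - 2) t x y) ∧
            (∀ x y, C.E (e₂ x) (e₂ y) ↔ EB14 (n - 2) t x y) ∧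
            (∀ x, e₁ x ∈ D ∧ g (e₁ x) = e₁ x) ∧
            (∀ x, e₂ x ∈ D ∧ g (e₂ x) = e₂ (f14 (n - 2) x)) := by

  rintro ⟨W, _, C, parts, hP, D, g, hginj, hgE, e₁, e₂, he₁inj, he₂inj, he₁E, he₂E,
    he₁D, he₂D⟩
  -- adjacent vertices of B map to distinct parts
  have hadj : ∀ x y, EB14 (n - 2) t x y → parts (e₁ x) ≠ parts (e₁ y) := by
    intro x y hxy hpeq
    exact ((hP _ _).mp hpeq).1 ((he₁E x y).mpr hxy)
  -- the map recording the parts hit by e₁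
  let ι : Fin 2 ⊕ Fin (n - 2) → Fin 4 ⊕ Fin (n - 2) :=
    Sum.map (Fin.castLE (by norm_num)) id
  let h : Fin 2 ⊕ Fin (n - 2) → Fin n := fun z => parts (e₁ (ι z))
  have hinj : Function.Injective h := by
    rintro (a | a) (b | b) hab
    · fin_cases a <;> fin_cases b
      · rfl
      · exact absurd hab (hadj (Sum.inl 0) (Sum.inl 1) (by simp [EB14]))
      · exact absurd hab.symm (hadj (Sum.inl 0) (Sum.inl 1) (by simp [EB14]))
      · rfl
    · exact absurd hab (hadj (ι (Sum.inl a)) (Sum.inr b) (by simp [EB14, ι]))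
    · exact absurd hab.symm (hadj (ι (Sum.inl b)) (Sum.inr a) (by simp [EB14, ι]))
    · by_contra hne
      have hne' : a ≠ b := fun h' => hne (by rw [h'])
      rcases ht_total a b hne' with hta | hta
      · exact hadj (Sum.inr a) (Sum.inr b) hta hab
      · exact hadj (Sum.inr b) (Sum.inr a) hta hab.symm
  have hsurj : Function.Surjective h := by
    have hcard : Fintype.card (Fin 2 ⊕ Fin (n - 2)) = Fintype.card (Fin n) := by
      simp; omega
    exact ((Fintype.bijective_iff_injective_and_card h).mpr ⟨hinj, hcard⟩).2
  -- g fixes every part setwise on D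
  have hfix : ∀ u ∈ D, parts (g u) = parts u := by
    intro u hu
    obtain ⟨z, hz⟩ := hsurj (parts u)
    have hwD := (he₁D (ι z)).1
    have hgw := (he₁D (ι z)).2
    have step : parts (g u) = parts (g (e₁ (ι z))) := by
      rw [hP, hgE u hu _ hwD, hgE _ hwD u hu, ← hP]
      exact hz.symm
    rw [step, hgw]; exact hz
  have h0 := he₂D (Sum.inl 0)
  have key := hfix _ h0.1
  rw [h0.2] at key
  have hf : f14 (n - 2) (Sum.inl 0) = Sum.inl 1 := by simp [f14]
  rw [hf] at key
  have hE : C.E (e₂ (Sum.inl 0)) (e₂ (Sum.inl 1)) :=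
    (he₂E _ _).mpr (by simp [EB14])
  exact ((hP _ _).mp key.symm).1 hE
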